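/- Let q be a power of an odd prime, n a positive integer, 0 < r₁ < r₂ < ⋯ < r_k < n, let t be an integer with r₁ < t < n, and let a₁, …, a_k be nonzero elements of F_{q^n} such that a_i^{q^{r₁}-1} = 1 for all i = 1, …, k. Let S(x) = Σ_{i=1}^{k} a_i x^{q^{r_i}} and T(x) = a₁x + Σ_{i=2}^{k} a_i x^{q^{r_i - r₁}}, viewed as maps on F_{q^n}. Then S is scattered of index t over F_{q^n} if and only if T is scattered of index t - r₁ over F_{q^n}. -/

import Mathlib

/-- A map `S : L → L` on the field `L = F_{q^n}` is scattered of index `t` over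
`F_{q^n}/F_q` if for all nonzero `y, z`, `S(y)/y^{q^t} = S(z)/z^{q^t}` implies
`y/z ∈ F_q`.  Membership of `y/z` in the subfield `F_q` is expressed via its
characterization as the fixed field of the `q`-power Frobenius: `(y/z)^q = y/z`. -/
def IsScattered (q t : ℕ) {L : Type} [Field L] (S : L → L) : Prop :=
  ∀ y z : L, y ≠ 0 → z ≠ 0 → S y * z ^ q ^ t = S z * y ^ q ^ t → (y / z) ^ q = y / z

/-- Let q be a power of an odd prime, n a positive integer,
0 < r₁ < r₂ < ⋯ < r_k < n, let t be an integer with r₁ < t < n, and let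
a₁, …, a_k be nonzero elements of F_{q^n} with a_i^{q^{r₁}-1} = 1 for all
i = 1, …, k.  Let S(x) = Σ_{i=1}^k a_i x^{q^{r_i}} and
T(x) = a₁x + Σ_{i=2}^k a_i x^{q^{r_i - r₁}}.  Then S is scattered of index t
iff T is scattered of index t - r₁.  (Indices: `Fin k`, where `⟨0, hk⟩`
corresponds to the subscript 1.) -/
theorem stmt8 (q n k t : ℕ)
    (hq : ∃ p m : ℕ, p.Prime ∧ Odd p ∧ 0 < m ∧ q = p ^ m)
    (hn : 0 < n) (hk : 0 < k)
    (r : Fin k → ℕ) (hmono : StrictMono r)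
    (hr0 : 0 < r ⟨0, hk⟩) (hrn : ∀ i, r i < n)
    (htl : r ⟨0, hk⟩ < t) (htn : t < n)
    (L : Type) [Field L] [Fintype L] (hcard : Fintype.card L = q ^ n)
    (a : Fin k → L) (ha : ∀ i, a i ≠ 0)
    (hord : ∀ i : Fin k, a i ^ (q ^ r ⟨0, hk⟩ - 1) = 1) :
    IsScattered q t (fun x : L => ∑ i, a i * x ^ q ^ r i) ↔
    IsScattered q (t - r ⟨0, hk⟩)
      (fun x : L => a ⟨0, hk⟩ * x +
        ∑ i ∈ Finset.univ.erase ⟨0, hk⟩, a i * x ^ q ^ (r i - r ⟨0, hk⟩)) := by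
  obtain ⟨p, m, hp, hpodd, hm, hqpm⟩ := hq
  haveI : Fact p.Prime := ⟨hp⟩
  set r1 := r ⟨0, hk⟩ with hr1
  -- characteristic of L is p
  haveI hcharp : CharP L p := by
    obtain ⟨d, hdp, hd⟩ := FiniteField.card L (ringChar L)
    have hpc : ringChar L ^ (d : ℕ) = p ^ (m * n) := by
      rw [← hd, hcard, hqpm, ← pow_mul]
    have hdvd : ringChar L ∣ p ^ (m * n) := hpc ▸ dvd_pow_self _ d.ne_zero
    have : ringChar L = p := (Nat.prime_dvd_prime_iff_eq hdp hp).mp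
      (hdp.dvd_of_dvd_pow hdvd)
    exact this ▸ ringChar.charP L
  haveI : ExpChar L p := .prime hp
  have hQ : q ^ r1 = p ^ (m * r1) := by rw [hqpm, ← pow_mul]
  have hmap : ∀ u : L, u ^ q ^ r1 = iterateFrobenius L p (m * r1) u := by
    intro u; rw [iterateFrobenius_def, ← hQ]
  have hinj : Function.Injective (fun u : L => u ^ q ^ r1) := by
    intro u v huv
    simp only [] at huv
    rw [hmap, hmap] at huv
    exact (iterateFrobenius L p (m * r1)).injective huv
  have hq1 : 1 ≤ q ^ r1 := Nat.one_le_pow _ _ (by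
    rw [hqpm]; exact Nat.pow_pos hp.pos)
  have hfix : ∀ i, a i ^ q ^ r1 = a i := by
    intro i
    rw [← Nat.sub_add_cancel hq1, pow_succ, hord i, one_mul]
  have hr1le : ∀ i : Fin k, r1 ≤ r i := fun i =>
    hmono.monotone (by exact Fin.mk_le_of_le_val (Nat.zero_le _))
  -- key identity
  have key : ∀ x w : L, (∑ i, a i * x ^ q ^ r i) * w ^ q ^ t
      = ((a ⟨0, hk⟩ * x +
          ∑ i ∈ Finset.univ.erase ⟨0, hk⟩, a i * x ^ q ^ (r i - r1)) *
          w ^ q ^ (t - r1)) ^ q ^ r1 := by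
    intro x w
    rw [hmap, map_mul, map_add, map_mul, map_sum]
    rw [← hmap (a ⟨0, hk⟩), hfix, ← hmap x, ← hmap]
    rw [← pow_mul, ← pow_add, Nat.sub_add_cancel htl.le]
    rw [← Finset.add_sum_erase _ _ (Finset.mem_univ ⟨0, hk⟩)]
    congr 2
    refine Finset.sum_congr rfl fun i _ => ?_
    rw [map_mul, ← hmap (a i), hfix, ← hmap, ← pow_mul, ← pow_add,
      Nat.sub_add_cancel (hr1le i)]
  have equiv : ∀ y z : L,
      ((∑ i, a i * y ^ q ^ r i) * z ^ q ^ t = (∑ i, a i * z ^ q ^ r i) * y ^ q ^ t) ↔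
      ((a ⟨0, hk⟩ * y + ∑ i ∈ Finset.univ.erase ⟨0, hk⟩, a i * y ^ q ^ (r i - r1)) *
          z ^ q ^ (t - r1) =
        (a ⟨0, hk⟩ * z + ∑ i ∈ Finset.univ.erase ⟨0, hk⟩, a i * z ^ q ^ (r i - r1)) *
          y ^ q ^ (t - r1)) := by
    intro y z
    rw [key y z, key z y]
    exact ⟨fun h => hinj h, fun h => by rw [h]⟩
  constructor
  · intro h y z hy hz heq
    exact h y z hy hz ((equiv y z).mpr heq)
  · intro h y z hy hz heq
    exact h y z hy hz ((equiv y z).mp heq)
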